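/- Let $B : I \to M_2(\mathbb{R})$ be an analytic family of real $2\times 2$ matrices on an interval $I\subset\mathbb{R}$, and suppose that for every $\mu\in I$ the eigenvalues of $B(\mu)$ are real. Then there exist analytic functions $\lambda_1,\lambda_2 : I \to \mathbb{R}$ such that the spectrum of $B(\mu)$ equals $\{\lambda_1(\mu),\lambda_2(\mu)\}$ for every $\mu\in I$. -/

import Mathlib

open Set Polynomial

open Filter Topology

lemma exists_local_sqrt_pos {g : ℝ → ℝ} {x : ℝ} (hg : AnalyticAt ℝ g x) (hx : 0 < g x) :
    ∃ s : ℝ → ℝ, AnalyticAt ℝ s x ∧ 0 < s x ∧ ∀ᶠ y in 𝓝 x, s y ^ 2 = g y := by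
  set s : ℝ → ℝ := fun y => (Complex.exp (Complex.log ((g y : ℝ) : ℂ) / 2)).re with hs
  have hco : AnalyticAt ℝ (fun y => ((g y : ℝ) : ℂ)) x :=
    (Complex.ofRealCLM.analyticAt (g x)).comp hg
  have hlog : AnalyticAt ℝ (fun y => Complex.log ((g y : ℝ) : ℂ)) x := by
    have := ((analyticAt_clog (Complex.ofReal_mem_slitPlane.2 hx)).restrictScalars).comp
      (f := fun y : ℝ => ((g y : ℝ) : ℂ)) hco
    exact this
  have hdiv : AnalyticAt ℝ (fun y => Complex.log ((g y : ℝ) : ℂ) / 2) x := by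
    exact hlog.div_const
  have hexp : AnalyticAt ℝ (fun y => Complex.exp (Complex.log ((g y : ℝ) : ℂ) / 2)) x := by
    have := (analyticAt_cexp.restrictScalars).comp
      (f := fun y : ℝ => Complex.log ((g y : ℝ) : ℂ) / 2) hdiv
    exact this
  have hsa : AnalyticAt ℝ s x := (Complex.reCLM.analyticAt _).comp hexp
  have hval : ∀ y : ℝ, 0 < g y → s y = Real.exp (Real.log (g y) / 2) := by
    intro y hy
    have h1 : Complex.log ((g y : ℝ) : ℂ) = ((Real.log (g y) : ℝ) : ℂ) :=
      (Complex.ofReal_log hy.le).symm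
    rw [hs]
    simp only [h1]
    rw [show ((Real.log (g y) : ℝ) : ℂ) / 2 = ((Real.log (g y) / 2 : ℝ) : ℂ) by push_cast; ring,
      ← Complex.ofReal_exp, Complex.ofReal_re]
  have hev : ∀ᶠ y in 𝓝 x, 0 < g y :=
    hg.continuousAt.eventually (eventually_gt_nhds hx)
  refine ⟨s, hsa, ?_, ?_⟩
  · rw [hval x hx]; positivity
  · filter_upwards [hev] with y hy
    rw [hval y hy, ← Real.exp_nat_mul]
    rw [show (2:ℕ) * (Real.log (g y) / 2) = Real.log (g y) by push_cast; ring, Real.exp_log hy]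

lemma local_sqrt {f : ℝ → ℝ} {x : ℝ} (hfa : AnalyticAt ℝ f x)
    (hnn : ∀ᶠ y in 𝓝 x, 0 ≤ f y) (hnz : ¬ (∀ᶠ y in 𝓝 x, f y = 0)) :
    ∃ s : ℝ → ℝ, AnalyticAt ℝ s x ∧ ∀ᶠ y in 𝓝 x, s y ^ 2 = f y := by
  have hord : analyticOrderAt f x ≠ ⊤ := fun h => hnz (analyticOrderAt_eq_top.1 h)
  obtain ⟨n, hn⟩ := WithTop.ne_top_iff_exists.1 hord
  obtain ⟨g, hga, hg0, hev⟩ := (hfa.analyticOrderAt_eq_natCast (n := n)).1 hn.symm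
  simp only [smul_eq_mul] at hev
  -- sign of g x
  have key : ∀ y : ℝ, f y = (y - x) ^ n * g y → 0 ≤ f y → g y ≠ 0 → y ≠ x →
      0 ≤ (y - x) ^ n * g y := by
    intro y h1 h2 _ _; rw [← h1]; exact h2
  have hgx : 0 < g x := by
    rcases hg0.lt_or_gt with hneg | hpos
    · exfalso
      have hevg : ∀ᶠ y in 𝓝 x, g y < 0 := hga.continuousAt.eventually (eventually_lt_nhds hneg)
      have : ∀ᶠ y in 𝓝[>] x, False := by
        filter_upwards [((hev.and hnn).and hevg).filter_mono nhdsWithin_le_nhds,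
          self_mem_nhdsWithin] with y ⟨⟨h1, h2⟩, h3⟩ (h4 : x < y)
        have hp : (0:ℝ) < (y - x) ^ n := pow_pos (by linarith) n
        nlinarith
      exact this.exists.choose_spec
    · exact hpos
  have hevgpos : ∀ᶠ y in 𝓝 x, 0 < g y := hga.continuousAt.eventually (eventually_gt_nhds hgx)
  have heven : Even n := by
    by_contra hodd
    rw [Nat.not_even_iff_odd] at hodd
    have : ∀ᶠ y in 𝓝[<] x, False := by
      filter_upwards [((hev.and hnn).and hevgpos).filter_mono nhdsWithin_le_nhds,
        self_mem_nhdsWithin] with y ⟨⟨h1, h2⟩, h3⟩ (h4 : y < x)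
      have hp : (y - x) ^ n < 0 := hodd.pow_neg (by linarith)
      nlinarith
    exact this.exists.choose_spec
  obtain ⟨k, hk⟩ := heven
  obtain ⟨t, hta, htx, htev⟩ := exists_local_sqrt_pos hga hgx
  refine ⟨fun y => (y - x) ^ k * t y, ?_, ?_⟩
  · exact ((analyticAt_id.sub analyticAt_const).pow k).mul hta
  · filter_upwards [hev, htev] with y h1 h2
    have : ((y - x) ^ k) ^ 2 = (y - x) ^ n := by
      rw [← pow_mul, hk]; ring_nf
    rw [mul_pow, this, h1, h2]

lemma analytic_mul_eq_zero {U : Set ℝ} (hUo : IsOpen U) (hU : IsPreconnected U)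
    {g h : ℝ → ℝ} (hg : AnalyticOnNhd ℝ g U) (hh : AnalyticOnNhd ℝ h U)
    (hz : ∀ y ∈ U, g y * h y = 0) :
    (∀ y ∈ U, g y = 0) ∨ (∀ y ∈ U, h y = 0) := by
  by_cases hc : ∃ z ∈ U, g z ≠ 0
  · right
    obtain ⟨z, hzU, hgz⟩ := hc
    have hev : h =ᶠ[𝓝 z] 0 := by
      filter_upwards [(hg z hzU).continuousAt.eventually_ne hgz, hUo.mem_nhds hzU] with y h1 h2
      exact (mul_eq_zero.1 (hz y h2)).resolve_left h1
    exact fun y hy => hh.eqOn_zero_of_preconnected_of_eventuallyEq_zero hU hzU hev hy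
  · left
    push_neg at hc
    exact hc

lemma sq_eq_dichotomy {O : Set ℝ} (hOo : IsOpen O) (hOc : IsPreconnected O)
    {u v : ℝ → ℝ} (hu : AnalyticOnNhd ℝ u O) (hv : AnalyticOnNhd ℝ v O)
    (h : ∀ y ∈ O, u y ^ 2 = v y ^ 2) :
    (∀ y ∈ O, u y = v y) ∨ (∀ y ∈ O, u y = - v y) := by
  have := analytic_mul_eq_zero hOo hOc (hu.sub hv) (hu.add hv)
    (fun y hy => by simp only [Pi.sub_apply, Pi.add_apply]; nlinarith [h y hy])
  rcases this with h1 | h1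
  · exact Or.inl fun y hy => by have := h1 y hy; simp only [Pi.sub_apply] at this; linarith
  · exact Or.inr fun y hy => by have := h1 y hy; simp only [Pi.add_apply] at this; linarith

/-- Data for a square root defined on an open interval containing `uIcc b x`. -/
def SqrtData (I : Set ℝ) (f : ℝ → ℝ) (b x : ℝ) : Prop :=
  ∃ c d s, Ioo c d ⊆ I ∧ uIcc b x ⊆ Ioo c d ∧ AnalyticOnNhd ℝ s (Ioo c d) ∧
    (∀ y ∈ Ioo c d, s y ^ 2 = f y) ∧ 0 < s b

lemma exists_analytic_sqrt {I : Set ℝ} (hIopen : IsOpen I) (hIconn : I.OrdConnected)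
    {f : ℝ → ℝ} (hf : AnalyticOnNhd ℝ f I) (hpos : ∀ x ∈ I, 0 ≤ f x) :
    ∃ s : ℝ → ℝ, AnalyticOnNhd ℝ s I ∧ ∀ x ∈ I, s x ^ 2 = f x := by
  classical
  by_cases hzero : ∀ x ∈ I, f x = 0
  · exact ⟨0, analyticOnNhd_const, fun x hx => by simp [hzero x hx]⟩
  push_neg at hzero
  obtain ⟨b, hbI, hb0⟩ := hzero
  have hIpre : IsPreconnected I := hIconn.isPreconnected
  have hnz : ∀ x ∈ I, ¬ (∀ᶠ y in 𝓝 x, f y = 0) := by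
    intro x hx hcon
    have heq : f =ᶠ[𝓝 x] 0 := by filter_upwards [hcon] with y hy; simpa using hy
    have := hf.eqOn_zero_of_preconnected_of_eventuallyEq_zero hIpre hx heq hbI
    simp only [Pi.zero_apply] at this
    exact hb0 this
  have hfb : 0 < f b := (hpos b hbI).lt_of_ne (Ne.symm hb0)
  -- local solutions on intervals
  have localIoo : ∀ x ∈ I, ∃ c d : ℝ, c < x ∧ x < d ∧ Ioo c d ⊆ I ∧
      ∃ s : ℝ → ℝ, AnalyticOnNhd ℝ s (Ioo c d) ∧ ∀ y ∈ Ioo c d, s y ^ 2 = f y := by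
    intro x hx
    have hnn : ∀ᶠ y in 𝓝 x, 0 ≤ f y := by
      filter_upwards [hIopen.mem_nhds hx] with y hy; exact hpos y hy
    obtain ⟨s, hsa, hsev⟩ := local_sqrt (hf x hx) hnn (hnz x hx)
    have hall : ∀ᶠ y in 𝓝 x, (s y ^ 2 = f y ∧ AnalyticAt ℝ s y) ∧ y ∈ I :=
      (hsev.and hsa.eventually_analyticAt).and (hIopen.mem_nhds hx)
    obtain ⟨ε, hε, hball⟩ := Metric.eventually_nhds_iff_ball.1 hall
    refine ⟨x - ε, x + ε, by linarith, by linarith, ?_, s, ?_, ?_⟩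
    · intro y hy
      exact (hball y (by rwa [Real.ball_eq_Ioo])).2
    · intro y hy
      exact (hball y (by rwa [Real.ball_eq_Ioo])).1.2
    · intro y hy
      exact (hball y (by rwa [Real.ball_eq_Ioo])).1.1
  -- base point
  have hPb : SqrtData I f b b := by
    obtain ⟨c, d, hc, hd, hsub, s, hsa, hsq⟩ := localIoo b hbI
    have hbmem : b ∈ Ioo c d := ⟨hc, hd⟩
    have hsb2 : s b ^ 2 = f b := hsq b hbmem
    have hsbne : s b ≠ 0 := by intro h; rw [h] at hsb2; nlinarith
    have huicc : uIcc b b ⊆ Ioo c d := by rw [uIcc_self]; exact singleton_subset_iff.2 hbmem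
    rcases hsbne.lt_or_gt with hneg | hposb
    · exact ⟨c, d, fun y => - s y, hsub, huicc, hsa.neg, fun y hy => by
        rw [neg_sq]; exact hsq y hy, by show 0 < -s b; linarith⟩
    · exact ⟨c, d, s, hsub, huicc, hsa, hsq, hposb⟩
  -- openness
  have hopen : ∀ x, SqrtData I f b x → ∃ c d, c < x ∧ x < d ∧
      ∀ y ∈ Ioo c d, SqrtData I f b y := by
    rintro x ⟨c, d, s, hsub, huicc, hsa, hsq, hsb⟩
    have hx : x ∈ Ioo c d := huicc right_mem_uIcc
    have hb' : b ∈ Ioo c d := huicc left_mem_uIcc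
    exact ⟨c, d, hx.1, hx.2, fun y hy =>
      ⟨c, d, s, hsub, ordConnected_Ioo.uIcc_subset hb' hy, hsa, hsq, hsb⟩⟩
  set T : Set ℝ := {x | SqrtData I f b x} with hT
  have hTopen : IsOpen T := by
    rw [isOpen_iff_forall_mem_open]
    intro x hx
    obtain ⟨c, d, hc, hd, h⟩ := hopen x hx
    exact ⟨Ioo c d, h, isOpen_Ioo, ⟨hc, hd⟩⟩
  -- closedness step
  have hclosed : ∀ x ∈ I, x ∈ closure T → SqrtData I f b x := by
    intro x hxI hxcl
    obtain ⟨c0, d0, hc0, hd0, hsub0, s0, hs0a, hs0q⟩ := localIoo x hxI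
    obtain ⟨x', hx'mem, hx'T⟩ : ∃ x', x' ∈ Ioo c0 d0 ∧ x' ∈ T := by
      have := _root_.mem_closure_iff_nhds.1 hxcl (Ioo c0 d0) (Ioo_mem_nhds hc0 hd0)
      obtain ⟨y, hy1, hy2⟩ := this
      exact ⟨y, hy1, hy2⟩
    obtain ⟨c, d, s, hsub, huicc, hsa, hsq, hsb⟩ := hx'T
    have hx'cd : x' ∈ Ioo c d := huicc right_mem_uIcc
    have hb' : b ∈ Ioo c d := huicc left_mem_uIcc
    have hOeq : Ioo (max c c0) (min d d0) = Ioo c d ∩ Ioo c0 d0 := (Ioo_inter_Ioo).symm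
    have hOsub1 : Ioo (max c c0) (min d d0) ⊆ Ioo c d := by
      rw [hOeq]; exact inter_subset_left
    have hOsub2 : Ioo (max c c0) (min d d0) ⊆ Ioo c0 d0 := by
      rw [hOeq]; exact inter_subset_right
    have hx'O : x' ∈ Ioo (max c c0) (min d d0) := by
      rw [hOeq]; exact ⟨hx'cd, hx'mem⟩
    have hdich := sq_eq_dichotomy isOpen_Ioo ordConnected_Ioo.isPreconnected
      (hsa.mono hOsub1) (hs0a.mono hOsub2)
      (fun y hy => by rw [hsq y (hOsub1 hy), hs0q y (hOsub2 hy)])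
    obtain ⟨σ, hσ1, hσ⟩ : ∃ σ : ℝ, σ ^ 2 = 1 ∧
        ∀ y ∈ Ioo (max c c0) (min d d0), s y = σ * s0 y := by
      rcases hdich with h | h
      · exact ⟨1, by norm_num, fun y hy => by rw [one_mul]; exact h y hy⟩
      · exact ⟨-1, by norm_num, fun y hy => by rw [neg_one_mul]; exact h y hy⟩
    have hunion : Ioo (min c c0) (max d d0) = Ioo c d ∪ Ioo c0 d0 :=
      (Ioo_union_Ioo' (lt_trans hx'mem.1 hx'cd.2) (lt_trans hx'cd.1 hx'mem.2)).symm
    set s' : ℝ → ℝ := fun y => if y ∈ Ioo c d then s y else σ * s0 y with hs'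
    have hid1 : ∀ y ∈ Ioo c d, s' y = s y := fun y hy => if_pos hy
    have hid2 : ∀ y ∈ Ioo c0 d0, s' y = σ * s0 y := by
      intro y hy
      by_cases hycd : y ∈ Ioo c d
      · rw [hid1 y hycd]
        exact hσ y (by rw [hOeq]; exact ⟨hycd, hy⟩)
      · exact if_neg hycd
    refine ⟨min c c0, max d d0, s', ?_, ?_, ?_, ?_, ?_⟩
    · rw [hunion]; exact union_subset hsub hsub0
    · refine ordConnected_Ioo.uIcc_subset ?_ ?_
      · rw [hunion]; exact mem_union_left _ hb'
      · rw [hunion]; exact mem_union_right _ ⟨hc0, hd0⟩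
    · intro y hy
      rw [hunion] at hy
      rcases (em (y ∈ Ioo c d)) with h | h
      · exact (hsa y h).congr (Filter.eventuallyEq_of_mem (isOpen_Ioo.mem_nhds h)
          (fun z hz => (hid1 z hz).symm))
      · have hy0 : y ∈ Ioo c0 d0 := hy.resolve_left h
        exact ((analyticAt_const.mul (hs0a y hy0)).congr
          (Filter.eventuallyEq_of_mem (isOpen_Ioo.mem_nhds hy0)
            (fun z hz => (hid2 z hz).symm)))
    · intro y hy
      rw [hunion] at hy
      rcases (em (y ∈ Ioo c d)) with h | h
      · rw [hid1 y h]; exact hsq y h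
      · have hy0 : y ∈ Ioo c0 d0 := hy.resolve_left h
        rw [hid2 y hy0, mul_pow, hσ1, one_mul]; exact hs0q y hy0
    · rw [hid1 b hb']; exact hsb
  -- T covers I
  have hTI : ∀ x ∈ I, SqrtData I f b x := by
    by_contra hcon
    push_neg at hcon
    obtain ⟨x0, hx0I, hx0P⟩ := hcon
    have hcover : I ⊆ T ∪ (closure T)ᶜ := by
      intro y hy
      by_cases h : y ∈ closure T
      · exact Or.inl (hclosed y hy h)
      · exact Or.inr h
    have h1 : (I ∩ T).Nonempty := ⟨b, hbI, hPb⟩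
    have h2 : (I ∩ (closure T)ᶜ).Nonempty :=
      ⟨x0, hx0I, fun hcl => hx0P (hclosed x0 hx0I hcl)⟩
    obtain ⟨y, hyI, hyT, hyV⟩ := hIpre T (closure T)ᶜ hTopen
      isClosed_closure.isOpen_compl hcover h1 h2
    exact hyV (subset_closure hyT)
  -- glue
  have hTI' : ∀ x, x ∈ I → ∃ c d s, Ioo c d ⊆ I ∧ uIcc b x ⊆ Ioo c d ∧
      AnalyticOnNhd ℝ s (Ioo c d) ∧ (∀ y ∈ Ioo c d, s y ^ 2 = f y) ∧ 0 < s b := hTI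
  choose! c d sf hsub huicc hsa hsq hsb using hTI'
  have hxmem : ∀ x (hx : x ∈ I), x ∈ Ioo (c x) (d x) := fun x hx => huicc x hx right_mem_uIcc
  have hbmem : ∀ x (hx : x ∈ I), b ∈ Ioo (c x) (d x) := fun x hx => huicc x hx left_mem_uIcc
  have hconsist : ∀ x, x ∈ I → ∀ y, y ∈ I → y ∈ Ioo (c x) (d x) → sf y y = sf x y := by
    intro x hx y hy hymem
    have hOeq : Ioo (max (c x) (c y)) (min (d x) (d y)) = Ioo (c x) (d x) ∩ Ioo (c y) (d y) :=
      (Ioo_inter_Ioo).symm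
    have hO1 : Ioo (max (c x) (c y)) (min (d x) (d y)) ⊆ Ioo (c x) (d x) := by
      rw [hOeq]; exact inter_subset_left
    have hO2 : Ioo (max (c x) (c y)) (min (d x) (d y)) ⊆ Ioo (c y) (d y) := by
      rw [hOeq]; exact inter_subset_right
    have hbO : b ∈ Ioo (max (c x) (c y)) (min (d x) (d y)) := by
      rw [hOeq]; exact ⟨hbmem x hx, hbmem y hy⟩
    have hyO : y ∈ Ioo (max (c x) (c y)) (min (d x) (d y)) := by
      rw [hOeq]; exact ⟨hymem, hxmem y hy⟩
    rcases sq_eq_dichotomy isOpen_Ioo ordConnected_Ioo.isPreconnected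
      ((hsa y hy).mono hO2) ((hsa x hx).mono hO1)
      (fun z hz => by rw [hsq y hy z (hO2 hz), hsq x hx z (hO1 hz)]) with h | h
    · exact h y hyO
    · exfalso
      have := h b hbO
      have h1 := hsb x hx
      have h2 := hsb y hy
      linarith
  refine ⟨fun y => if hy : y ∈ I then sf y y else 0, ?_, ?_⟩
  · intro x hx
    have heq : ∀ y ∈ Ioo (c x) (d x),
        sf x y = (fun y => if hy : y ∈ I then sf y y else 0) y := by
      intro y hy
      have hyI : y ∈ I := hsub x hx hy
      simp only [dif_pos hyI]
      exact (hconsist x hx y hyI hy).symm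
    exact (hsa x hx x (hxmem x hx)).congr
      (Filter.eventuallyEq_of_mem (isOpen_Ioo.mem_nhds (hxmem x hx)) heq)
  · intro x hx
    simp only [dif_pos hx]
    exact hsq x hx x (hxmem x hx)

/-- an analytic family of real 2×2 matrices on an interval with everywhere
real eigenvalues (equivalently, nonnegative discriminant) admits two analytic eigenvalue
branches `λ₁, λ₂` with `Sp B(μ) = {λ₁(μ), λ₂(μ)}` (counted with multiplicity via the
characteristic polynomial). -/
theorem stmt_10 (I : Set ℝ) (hIopen : IsOpen I) (hIconn : I.OrdConnected)
    (B : ℝ → Matrix (Fin 2) (Fin 2) ℝ)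
    (hB : ∀ i j, AnalyticOnNhd ℝ (fun μ => B μ i j) I)
    (hreal : ∀ μ ∈ I, 0 ≤ (Matrix.trace (B μ)) ^ 2 - 4 * (B μ).det) :
    ∃ l1 l2 : ℝ → ℝ, AnalyticOnNhd ℝ l1 I ∧ AnalyticOnNhd ℝ l2 I ∧
      ∀ μ ∈ I, (B μ).charpoly = (X - C (l1 μ)) * (X - C (l2 μ)) := by
  have htr : AnalyticOnNhd ℝ (fun μ => Matrix.trace (B μ)) I := by
    have h : (fun μ => Matrix.trace (B μ)) = fun μ => B μ 0 0 + B μ 1 1 := by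
      funext μ; rw [Matrix.trace_fin_two]
    rw [h]; exact (hB 0 0).add (hB 1 1)
  have hdt : AnalyticOnNhd ℝ (fun μ => (B μ).det) I := by
    have h : (fun μ => (B μ).det) = fun μ => B μ 0 0 * B μ 1 1 - B μ 0 1 * B μ 1 0 := by
      funext μ; rw [Matrix.det_fin_two]
    rw [h]; exact ((hB 0 0).mul (hB 1 1)).sub ((hB 0 1).mul (hB 1 0))
  have hΔ : AnalyticOnNhd ℝ (fun μ => (Matrix.trace (B μ)) ^ 2 - 4 * (B μ).det) I :=
    (htr.pow 2).sub (analyticOnNhd_const.mul hdt)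
  obtain ⟨s, hsa, hsq⟩ := exists_analytic_sqrt hIopen hIconn hΔ hreal
  refine ⟨fun μ => (Matrix.trace (B μ) + s μ) * 2⁻¹, fun μ => (Matrix.trace (B μ) - s μ) * 2⁻¹,
    (htr.add hsa).mul analyticOnNhd_const, (htr.sub hsa).mul analyticOnNhd_const, ?_⟩
  · intro μ hμ
    have h2 := hsq μ hμ
    set a := B μ 0 0 with ha
    set bb := B μ 0 1 with hbb
    set cc := B μ 1 0 with hcc
    set dd := B μ 1 1 with hdd
    have htr2 : Matrix.trace (B μ) = a + dd := Matrix.trace_fin_two _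
    have hdet2 : (B μ).det = a * dd - bb * cc := Matrix.det_fin_two _
    set l1v := (Matrix.trace (B μ) + s μ) * 2⁻¹ with hl1
    set l2v := (Matrix.trace (B μ) - s μ) * 2⁻¹ with hl2
    have h1 : l1v + l2v = a + dd := by rw [hl1, hl2, ← htr2]; ring
    have hprod : l1v * l2v = a * dd - bb * cc := by
      rw [hl1, hl2, ← hdet2]
      have : s μ ^ 2 = Matrix.trace (B μ) ^ 2 - 4 * (B μ).det := h2
      nlinarith [this]
    have hcp : (B μ).charpoly = (X - C a) * (X - C dd) - (- C bb) * (- C cc) := by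
      unfold Matrix.charpoly
      rw [Matrix.det_fin_two, Matrix.charmatrix_apply_eq, Matrix.charmatrix_apply_eq,
        Matrix.charmatrix_apply_ne _ _ _ (by decide), Matrix.charmatrix_apply_ne _ _ _ (by decide)]
    rw [hcp]
    have hC1 : C l1v + C l2v = C a + C dd := by rw [← C_add, ← C_add, h1]
    have hC2 : C l1v * C l2v = C a * C dd - C bb * C cc := by
      rw [← C_mul, ← C_mul, ← C_mul, hprod, map_sub]
    linear_combination (X : ℝ[X]) * hC1 - hC2
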